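/- Let G be a graph with n vertices that admits a 4-strategy with respect to K_3 (i.e., G ≤₄ K_3). Then G has a proper coloring with at most 3⌈√n⌉ colors. -/

import Mathlib

/-- `H` is a `k`-strategy on the graph `G` and the complete graph `K_q`:
a nonempty family of partial homomorphisms (partial proper `q`-colorings,
encoded as maps `V → Option (Fin q)`) with domains of size at most `k`,
closed under restrictions, and with the extension property up to `k`. -/
def IsStrategy {V : Type*} (G : SimpleGraph V) (q k : ℕ)
    (H : Set (V → Option (Fin q))) : Prop :=
  H.Nonempty ∧
  (∀ h ∈ H, ∀ u v : V, G.Adj u v →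
    ∀ a b : Fin q, h u = some a → h v = some b → a ≠ b) ∧
  (∀ h ∈ H, {v | h v ≠ none}.Finite ∧ {v | h v ≠ none}.ncard ≤ k) ∧
  (∀ h ∈ H, ∀ h' : V → Option (Fin q),
    (∀ v, h' v = h v ∨ h' v = none) → h' ∈ H) ∧
  (∀ h ∈ H, {v | h v ≠ none}.ncard < k → ∀ x, h x = none →
    ∃ h' ∈ H, (∀ v, v ≠ x → h' v = h v) ∧ h' x ≠ none)

/-- Partial colorability predicate: the graph restricted to `S` can be properly
colored with colors `< n`. -/
def GoodCol (G : SimpleGraph V) (S : Finset V) (n : ℕ) : Prop :=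
  ∃ f : V → ℕ, (∀ v ∈ S, f v < n) ∧ ∀ u ∈ S, ∀ v ∈ S, G.Adj u v → f u ≠ f v

lemma GoodCol.mono {G : SimpleGraph V} {S : Finset V} {n n' : ℕ} (h : GoodCol G S n)
    (hn : n ≤ n') : GoodCol G S n' := by
  obtain ⟨f, h1, h2⟩ := h
  exact ⟨f, fun v hv => lt_of_lt_of_le (h1 v hv) hn, h2⟩

lemma goodCol_greedy [DecidableEq V] (G : SimpleGraph V) [DecidableRel G.Adj] (s : ℕ) :
    ∀ S : Finset V, (∀ x ∈ S, (S.filter (G.Adj x)).card < s) → GoodCol G S s := by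
  intro S
  induction S using Finset.induction_on with
  | empty => exact fun _ => ⟨fun _ => 0, by simp, by simp⟩
  | @insert a S ha ih =>
    intro hdeg
    obtain ⟨f, hf1, hf2⟩ := ih (fun x hx => lt_of_le_of_lt
      (Finset.card_le_card (Finset.filter_subset_filter _ (Finset.subset_insert a S)))
      (hdeg x (Finset.mem_insert_of_mem hx)))
    -- colors used by neighbors of a in S
    set T : Finset ℕ := (S.filter (G.Adj a)).image f with hT
    have hTcard : T.card < s := by
      calc T.card ≤ (S.filter (G.Adj a)).card := Finset.card_image_le
        _ ≤ ((insert a S).filter (G.Adj a)).card :=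
            Finset.card_le_card (Finset.filter_subset_filter _ (Finset.subset_insert a S))
        _ < s := hdeg a (Finset.mem_insert_self a S)
    have : ¬ (Finset.range s ⊆ T) := fun hsub => absurd (Finset.card_le_card hsub)
      (by rw [Finset.card_range]; omega)
    obtain ⟨c, hc1, hc2⟩ := Finset.not_subset.mp this
    rw [Finset.mem_range] at hc1
    refine ⟨Function.update f a c, ?_, ?_⟩
    · intro v hv
      rcases Finset.mem_insert.mp hv with rfl | hv'
      · simpa using hc1
      · have hva : v ≠ a := by rintro rfl; exact ha hv'
        rw [Function.update_of_ne hva]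
        exact hf1 v hv'
    · intro u hu v hv hadj
      rcases Finset.mem_insert.mp hu with rfl | hu'
      · rcases Finset.mem_insert.mp hv with rfl | hv'
        · exact absurd hadj (G.loopless.irrefl _)
        · have hva : v ≠ u := by rintro rfl; exact ha hv'
          rw [Function.update_self, Function.update_of_ne hva]
          intro hEq
          exact hc2 (hEq ▸ Finset.mem_image_of_mem f (Finset.mem_filter.mpr ⟨hv', hadj⟩))
      · rcases Finset.mem_insert.mp hv with rfl | hv'
        · have hua : u ≠ v := by rintro rfl; exact ha hu'
          rw [Function.update_self, Function.update_of_ne hua]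
          intro hEq
          exact hc2 (hEq.symm ▸ Finset.mem_image_of_mem f
            (Finset.mem_filter.mpr ⟨hu', hadj.symm⟩))
        · have hua : u ≠ a := by rintro rfl; exact ha hu'
          have hva : v ≠ a := by rintro rfl; exact ha hv'
          rw [Function.update_of_ne hua, Function.update_of_ne hva]
          exact hf2 u hu' v hv' hadj

section Strategy

lemma fin3_third {b c d : Fin 3} (h1 : b ≠ c) (h2 : b ≠ d) (h3 : d ≠ c) : b = -(c + d) := by
  revert h1 h2 h3; revert b c d; decide

lemma fin3_flip_ne_left {c d : Fin 3} (h : d ≠ c) : -(c + d) ≠ c := by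
  revert h; revert c d; decide

lemma fin3_flip_ne_right {c d : Fin 3} (h : d ≠ c) : -(c + d) ≠ d := by
  revert h; revert c d; decide

lemma fin3_flip_flip (c d : Fin 3) : -(c + -(c + d)) = d := by
  revert c d; decide

variable {G : SimpleGraph V}

/-- The graph induced on `N` (as a graph on the same vertex type). -/
def nbrGraph (G : SimpleGraph V) (N : Finset V) : SimpleGraph V where
  Adj u v := u ∈ N ∧ v ∈ N ∧ G.Adj u v
  symm.symm u v h := ⟨h.2.1, h.1, h.2.2.symm⟩
  loopless.irrefl v h := G.loopless.irrefl v h.2.2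

/-- A state of the strategy: `x`, an anchor `u₀` and the current vertex `u`
are colored (`c`, `a`, `d` respectively), everything else uncolored. -/
def StState (H : Set (V → Option (Fin 3))) (x u₀ u : V) (c a d : Fin 3) : Prop :=
  ∃ h ∈ H, h x = some c ∧ h u₀ = some a ∧ h u = some d ∧
    ∀ w, w ≠ x → w ≠ u₀ → w ≠ u → h w = none

lemma restrict_mem {H : Set (V → Option (Fin 3))} (hH : IsStrategy G 3 4 H)
    {h : V → Option (Fin 3)} (hh : h ∈ H) (p : V → Prop) [DecidablePred p] :
    (fun v => if p v then h v else none) ∈ H :=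
  hH.2.2.2.1 h hh _ (fun v => by by_cases hv : p v <;> simp [hv])

lemma ncard_lt_four {h : V → Option (Fin 3)} {x u₀ u : V}
    (hdom : ∀ w, w ≠ x → w ≠ u₀ → w ≠ u → h w = none) :
    {v | h v ≠ none}.ncard < 4 := by
  have hsub : {v | h v ≠ none} ⊆ {x, u₀, u} := by
    intro v hv
    by_contra hmem
    simp only [Set.mem_insert_iff, Set.mem_singleton_iff, not_or] at hmem
    exact hv (hdom v hmem.1 hmem.2.1 hmem.2.2)
  have := Set.ncard_le_ncard hsub (Set.toFinite _)
  have h3 : ({x, u₀, u} : Set V).ncard ≤ 3 := by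
    apply le_trans (Set.ncard_insert_le _ _)
    have := Set.ncard_insert_le u₀ ({u} : Set V)
    simp [Set.ncard_singleton] at this ⊢
    omega
  omega

/-- One step of the propagation along the neighborhood of `x`. -/
lemma st_step {H : Set (V → Option (Fin 3))} (hH : IsStrategy G 3 4 H)
    {x u₀ u w : V} {c a d : Fin 3} (hxu₀ : G.Adj x u₀) (hxw : G.Adj x w)
    (huw : G.Adj u w) (hdc : d ≠ c) (hst : StState H x u₀ u c a d) :
    StState H x u₀ w c a (-(c + d)) := by
  classical
  obtain ⟨h, hh, hx, hu₀, hu, hrest⟩ := hst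
  have hprop := hH.2.1
  have hac : a ≠ c := (hprop h hh x u₀ hxu₀ c a hx hu₀).symm
  have hwx : w ≠ x := fun hEq => G.loopless.irrefl x (hEq ▸ hxw)
  have hwu : w ≠ u := fun hEq => G.loopless.irrefl u (hEq ▸ huw)
  by_cases hwu₀ : w = u₀
  · -- the walk returns to the anchor; the color there is already forced
    subst hwu₀
    have hda : d ≠ a := hprop h hh u w huw d a hu hu₀
    have hflip : -(c + d) = a := (fin3_third hac hda.symm hdc).symm
    refine ⟨fun v => if v = x ∨ v = w then h v else none, restrict_mem hH hh _, ?_, ?_, ?_, ?_⟩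
    · simp [hx]
    · simp [hu₀]
    · simp [hu₀, hflip]
    · intro v hvx hvu₀ _
      simp [hvx, hvu₀]
  · -- extend the current state at `w`
    have hwnone : h w = none := hrest w hwx hwu₀ hwu
    obtain ⟨h', hh', hagree, hw'⟩ := hH.2.2.2.2 h hh (ncard_lt_four hrest) w hwnone
    obtain ⟨b, hb⟩ := Option.ne_none_iff_exists'.mp hw'
    have hx' : h' x = some c := (hagree x hwx.symm).trans hx
    have hu' : h' u = some d := (hagree u (fun hEq => hwu hEq.symm)).trans hu
    have hu₀' : h' u₀ = some a := (hagree u₀ (fun hEq => hwu₀ hEq.symm)).trans hu₀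
    have hbc : b ≠ c := (hprop h' hh' x w hxw c b hx' hb).symm
    have hbd : b ≠ d := (hprop h' hh' u w huw d b hu' hb).symm
    have hbval : b = -(c + d) := fin3_third hbc hbd hdc
    refine ⟨fun v => if v = x ∨ v = u₀ ∨ v = w then h' v else none,
      restrict_mem hH hh' _, ?_, ?_, ?_, ?_⟩
    · simp [hx']
    · simp [hu₀']
    · simp [hb, hbval]
    · intro v hvx hvu₀ hvw
      simp [hvx, hvu₀, hvw]

end Strategy

section Walks

variable {G : SimpleGraph V} {H : Set (V → Option (Fin 3))} {N : Finset V} {x : V}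

lemma st_walk (hH : IsStrategy G 3 4 H) (hN : ∀ v ∈ N, G.Adj x v)
    {u₀ : V} (hu₀ : u₀ ∈ N) {c a : Fin 3} :
    ∀ {u v : V} (p : (nbrGraph G N).Walk u v) (d : Fin 3), d ≠ c →
      StState H x u₀ u c a d →
      StState H x u₀ v c a (if Even p.length then d else -(c + d)) := by
  intro u v p
  induction p with
  | nil => intro d hdc hst; simpa using hst
  | @cons u u' v hadj q ih =>
    intro d hdc hst
    obtain ⟨huN, hu'N, huu'⟩ := id hadj
    have hstep := st_step hH (hN u₀ hu₀) (hN u' hu'N) huu' hdc hst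
    have := ih (-(c + d)) (fin3_flip_ne_left hdc) hstep
    rw [SimpleGraph.Walk.length_cons]
    rcases Nat.even_or_odd q.length with he | ho
    · simpa [he, Nat.even_add_one, Nat.not_even_iff_odd, he.add_one] using this
    · simpa [Nat.not_even_iff_odd.mpr ho, Nat.even_add_one, Nat.not_odd_iff_even,
        fin3_flip_flip] using this

lemma even_closed_walk (hH : IsStrategy G 3 4 H) (hN : ∀ v ∈ N, G.Adj x v)
    {u : V} (p : (nbrGraph G N).Walk u u) : Even p.length := by
  classical
  cases p with
  | nil => simp
  | @cons _ u' _ hadj q =>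
    set p : (nbrGraph G N).Walk u u := SimpleGraph.Walk.cons hadj q with hp
    have huN : u ∈ N := hadj.1
    have hxu : G.Adj x u := hN u huN
    -- build the initial state
    obtain ⟨h₀, hh₀⟩ := hH.1
    have hemp : (fun _ : V => (none : Option (Fin 3))) ∈ H :=
      hH.2.2.2.1 h₀ hh₀ _ (fun v => Or.inr rfl)
    have hcard0 : {v | (fun _ : V => (none : Option (Fin 3))) v ≠ none}.ncard < 4 := by
      simp
    obtain ⟨h1, hh1, hag1, hx1⟩ := hH.2.2.2.2 _ hemp hcard0 x rfl
    obtain ⟨c, hc⟩ := Option.ne_none_iff_exists'.mp hx1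
    have h1rest : ∀ w, w ≠ x → h1 w = none := fun w hw => hag1 w hw
    have hux : u ≠ x := fun hEq => G.loopless.irrefl x (hEq ▸ hxu)
    have hcard1 : {v | h1 v ≠ none}.ncard < 4 :=
      ncard_lt_four (x := x) (u₀ := x) (u := x) (fun w hw _ _ => h1rest w hw)
    obtain ⟨h2, hh2, hag2, hu2⟩ := hH.2.2.2.2 _ hh1 hcard1 u (h1rest u hux)
    obtain ⟨a, ha⟩ := Option.ne_none_iff_exists'.mp hu2
    have hx2 : h2 x = some c := (hag2 x (Ne.symm hux)).trans hc
    have hac : a ≠ c := (hH.2.1 h2 hh2 x u hxu c a hx2 ha).symm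
    have hst : StState H x u u c a a :=
      ⟨h2, hh2, hx2, ha, ha, fun w hwx _ hwu => (hag2 w hwu).trans (h1rest w hwx)⟩
    have := st_walk hH hN huN p a hac hst
    obtain ⟨h, hh, hhx, hhu₀, hhu, _⟩ := this
    by_contra hodd
    rw [if_neg hodd] at hhu
    have : some a = some (-(c + a)) := hhu₀.symm.trans hhu
    exact fin3_flip_ne_right hac (Option.some_injective _ this).symm

end Walks

section TwoCol

variable {G : SimpleGraph V} {H : Set (V → Option (Fin 3))} {N : Finset V} {x : V}

lemma walk_parity (hH : IsStrategy G 3 4 H) (hN : ∀ v ∈ N, G.Adj x v)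
    {u v : V} (p q : (nbrGraph G N).Walk u v) : (Even p.length ↔ Even q.length) := by
  have := even_closed_walk hH hN (p.append q.reverse)
  rw [SimpleGraph.Walk.length_append, SimpleGraph.Walk.length_reverse] at this
  exact Nat.even_add.mp this

lemma twocol (hH : IsStrategy G 3 4 H) (hN : ∀ v ∈ N, G.Adj x v) : GoodCol G N 2 := by
  classical
  set GN := nbrGraph G N with hGN
  have hreach : ∀ v : V, GN.Reachable (Quot.out (GN.connectedComponentMk v)) v := by
    intro v
    apply SimpleGraph.ConnectedComponent.exact
    exact Quot.out_eq _
  refine ⟨fun v => if Even ((hreach v).some.length) then 0 else 1, ?_, ?_⟩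
  · intro v _
    dsimp only
    split <;> omega
  · intro u hu v hv hadj
    dsimp only
    have hadj' : GN.Adj u v := ⟨hu, hv, hadj⟩
    have hroot : Quot.out (GN.connectedComponentMk u) = Quot.out (GN.connectedComponentMk v) := by
      rw [SimpleGraph.ConnectedComponent.connectedComponentMk_eq_of_adj hadj']
    have hpar := walk_parity hH hN (hreach v).some
      (((hreach u).some.copy hroot rfl).concat hadj')
    rw [SimpleGraph.Walk.length_concat, SimpleGraph.Walk.length_copy,
      Nat.even_add_one] at hpar
    by_cases hE : Even ((hreach u).some.length)
    · have hE2 : ¬ Even ((hreach v).some.length) := fun hc => (hpar.mp hc) hE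
      rw [if_pos hE, if_neg hE2]
      omega
    · have hE2 : Even ((hreach v).some.length) := hpar.mpr hE
      rw [if_neg hE, if_pos hE2]
      omega

end TwoCol

section Main

variable {G : SimpleGraph V}

lemma main_induction [DecidableEq V] [DecidableRel G.Adj]
    {H : Set (V → Option (Fin 3))} (hH : IsStrategy G 3 4 H) (s : ℕ) :
    ∀ m : ℕ, ∀ S : Finset V, S.card ≤ m * s → GoodCol G S (s + 2 * m) := by
  intro m
  induction m with
  | zero =>
    intro S hS
    simp only [Nat.zero_mul, Nat.le_zero, Finset.card_eq_zero] at hS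
    subst hS
    exact ⟨fun _ => 0, by simp, by simp⟩
  | succ m ih =>
    intro S hS
    by_cases hA : ∀ y ∈ S, (S.filter (G.Adj y)).card < s
    · exact (goodCol_greedy G s S hA).mono (by omega)
    · push_neg at hA
      obtain ⟨y, hy, hdeg⟩ := hA
      set N : Finset V := S.filter (G.Adj y) with hN
      have hNadj : ∀ v ∈ N, G.Adj y v := fun v hv => (Finset.mem_filter.mp hv).2
      have h2 : GoodCol G N 2 := twocol hH hNadj
      have hNS : N ⊆ S := Finset.filter_subset _ _
      have hcard : (S \ N).card ≤ m * s := by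
        have h1 := Finset.card_sdiff_add_card_eq_card hNS
        rw [Nat.succ_mul] at hS
        omega
      obtain ⟨f1, hf1a, hf1b⟩ := ih (S \ N) hcard
      obtain ⟨f2, hf2a, hf2b⟩ := h2
      refine ⟨fun v => if v ∈ N then s + 2 * m + f2 v else f1 v, ?_, ?_⟩
      · intro v hv
        by_cases hvN : v ∈ N
        · have := hf2a v hvN
          simp only [if_pos hvN]
          omega
        · have := hf1a v (Finset.mem_sdiff.mpr ⟨hv, hvN⟩)
          simp only [if_neg hvN]
          omega
      · intro u hu v hv hadj
        dsimp only
        by_cases huN : u ∈ N <;> by_cases hvN : v ∈ N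
        · rw [if_pos huN, if_pos hvN]
          have := hf2b u huN v hvN hadj
          omega
        · rw [if_pos huN, if_neg hvN]
          have := hf1a v (Finset.mem_sdiff.mpr ⟨hv, hvN⟩)
          omega
        · rw [if_neg huN, if_pos hvN]
          have := hf1a u (Finset.mem_sdiff.mpr ⟨hu, huN⟩)
          omega
        · rw [if_neg huN, if_neg hvN]
          exact hf1b u (Finset.mem_sdiff.mpr ⟨hu, huN⟩) v (Finset.mem_sdiff.mpr ⟨hv, hvN⟩) hadj

end Main

theorem colorable_of_four_strategy {V : Type*} [Fintype V]
    (G : SimpleGraph V)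
    (hstrat : ∃ H : Set (V → Option (Fin 3)), IsStrategy G 3 4 H) :
    G.Colorable (3 * ⌈Real.sqrt (Fintype.card V)⌉₊) := by
  classical
  obtain ⟨H, hH⟩ := hstrat
  set n := Fintype.card V with hn
  set s := ⌈Real.sqrt n⌉₊ with hs
  have hns : n ≤ s * s := by
    have h1 : Real.sqrt n ≤ (s : ℝ) := Nat.le_ceil _
    have h2 : (n : ℝ) ≤ (s : ℝ) * (s : ℝ) := by
      have := Real.sq_sqrt (by positivity : (0:ℝ) ≤ (n:ℝ))
      nlinarith [Real.sqrt_nonneg (n:ℝ)]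
    exact_mod_cast h2
  have hmain := main_induction hH s s (Finset.univ : Finset V) (by simpa using hns)
  obtain ⟨f, hf1, hf2⟩ := hmain
  have hbound : ∀ v : V, f v < 3 * s := by
    intro v
    have := hf1 v (Finset.mem_univ v)
    omega
  exact ⟨SimpleGraph.Coloring.mk (fun v => ⟨f v, hbound v⟩)
    (fun {u v} hadj hEq => hf2 u (Finset.mem_univ u) v (Finset.mem_univ v) hadj
      (by simpa using congrArg Fin.val hEq))⟩
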